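/- Let n be a positive integer. Then every balanced rooted binary phylogenetic tree on 2^(n−1) leaves embeds 2^(⌊n − log₂ n − 1⌋) label-disjoint n-caterpillars. -/

import Mathlib

/-!
Rooted binary phylogenetic trees, restrictions, agreement subtrees, and
maximum agreement subtrees (MASTs), following Martin–Thatte style definitions.
-/

namespace PhyloMAST

/-- A rooted binary tree with leaves labelled by `α`. -/
inductive PTree (α : Type) : Type
  | leaf : α → PTree α
  | node : PTree α → PTree α → PTree α

namespace PTree

variable {α β : Type}

/-- The list of leaf labels, read left to right. -/
def leafList : PTree α → List α
  | leaf x => [x]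
  | node l r => leafList l ++ leafList r

/-- The set of leaf labels. -/
def leaves [DecidableEq α] (t : PTree α) : Finset α := t.leafList.toFinset

/-- The height: number of edges on a longest root-to-leaf path. -/
def height : PTree α → ℕ
  | leaf _ => 0
  | node l r => max (height l) (height r) + 1

/-- `t` is a genuine phylogenetic tree: its leaf labels are pairwise distinct. -/
def Phylo (t : PTree α) : Prop := t.leafList.Nodup

/-- `t` is balanced: its number of leaves is `2 ^ height`. -/
def Balanced (t : PTree α) : Prop := t.leafList.length = 2 ^ t.height

/-- The restriction `t|Y`: the minimal subtree connecting the leaves in `Y`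
with all non-root degree-two vertices suppressed; `none` if no leaf of `t`
lies in `Y`. -/
def restrict [DecidableEq α] : PTree α → Finset α → Option (PTree α)
  | leaf x, Y => if x ∈ Y then some (leaf x) else none
  | node l r, Y =>
    match restrict l Y, restrict r Y with
    | some l', some r' => some (node l' r')
    | some l', none => some l'
    | none, some r' => some r'
    | none, none => none

/-- Isomorphism of leaf-labelled rooted binary trees (children are unordered). -/
inductive Iso : PTree α → PTree α → Prop
  | leaf (x : α) : Iso (leaf x) (leaf x)
  | node {a b c d : PTree α} : Iso a c → Iso b d → Iso (node a b) (node c d)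
  | swap {a b c d : PTree α} : Iso a d → Iso b c → Iso (node a b) (node c d)

/-- `Agree S T Y`: the set `Y` induces an agreement subtree of `S` and `T`. -/
def Agree [DecidableEq α] (S T : PTree α) (Y : Finset α) : Prop :=
  Y ⊆ S.leaves ∩ T.leaves ∧
    ∃ S' T', S.restrict Y = some S' ∧ T.restrict Y = some T' ∧ Iso S' T'

/-- `mast S T`: the maximum size of an agreement subtree of `S` and `T`. -/
noncomputable def mast [DecidableEq α] (S T : PTree α) : ℕ :=
  sSup {k | ∃ Y : Finset α, Agree S T Y ∧ Y.card = k}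

/-- The caterpillar tree `(l₁, l₂, …, lₙ)` built from a (nonempty) list:
`l₁` and `l₂` share a parent, and each later leaf hangs off the path to the
root, which is adjacent to the last leaf. -/
def catList [Inhabited α] : List α → PTree α
  | [] => leaf default
  | x :: xs => xs.foldl (fun t y => node t (leaf y)) (leaf x)

/-- `T` embeds the phylogenetic tree `T'`: the label set of `T'` is contained
in that of `T`, and the restriction of `T` to it is isomorphic to `T'`. -/
def Embeds [DecidableEq α] (T T' : PTree α) : Prop :=
  T'.leaves ⊆ T.leaves ∧ ∃ R, T.restrict T'.leaves = some R ∧ Iso R T'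

/-- `Subtree s t`: `s` is a (pendant) subtree of `t` (possibly `t` itself). -/
inductive Subtree : PTree α → PTree α → Prop
  | refl (t : PTree α) : Subtree t t
  | left {s l r : PTree α} : Subtree s l → Subtree s (node l r)
  | right {s l r : PTree α} : Subtree s r → Subtree s (node l r)

/-- The pendant subtrees rooted at depth `k`, read left to right. -/
def subtreesAt : ℕ → PTree α → List (PTree α)
  | 0, t => [t]
  | _ + 1, leaf x => [leaf x]
  | k + 1, node l r => subtreesAt k l ++ subtreesAt k r

/-- Two trees have the same unlabelled shape (a labelling of the second
yields the first). -/
inductive SameShape : PTree α → PTree β → Prop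
  | leaf (x : α) (y : β) : SameShape (leaf x) (leaf y)
  | node {a b : PTree α} {c d : PTree β} :
      SameShape a c → SameShape b d → SameShape (node a b) (node c d)

end PTree

end PhyloMAST

open PhyloMAST PTree

section Aux
set_option linter.unusedSectionVars false
variable {α : Type} [DecidableEq α]

theorem aux_leafList_ne_nil (t : PTree α) : t.leafList ≠ [] := by
  induction t with
  | leaf x => simp [leafList]
  | node l r ihl ihr => simp [leafList, ihl]

theorem aux_length_pos (t : PTree α) : 0 < t.leafList.length :=
  List.length_pos_iff.mpr (aux_leafList_ne_nil t)

theorem aux_length_le (t : PTree α) : t.leafList.length ≤ 2 ^ t.height := by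
  induction t with
  | leaf x => simp [leafList, height]
  | node l r ihl ihr =>
    simp only [leafList, height, List.length_append, pow_succ]
    have h1 : 2 ^ l.height ≤ 2 ^ (max l.height r.height) :=
      Nat.pow_le_pow_right (by norm_num) (le_max_left _ _)
    have h2 : 2 ^ r.height ≤ 2 ^ (max l.height r.height) :=
      Nat.pow_le_pow_right (by norm_num) (le_max_right _ _)
    omega

theorem aux_phylo_node {l r : PTree α} (h : (node l r).Phylo) :
    l.Phylo ∧ r.Phylo ∧ ∀ x ∈ l.leafList, x ∉ r.leafList := by
  have := h
  rw [Phylo, leafList, List.nodup_append] at this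
  exact ⟨this.1, this.2.1, fun x hx hr => this.2.2 x hx x hr rfl⟩

theorem aux_balanced_node {l r : PTree α} (hb : (node l r).Balanced) :
    l.Balanced ∧ r.Balanced ∧ l.height = r.height ∧ (node l r).height = l.height + 1 := by
  have hl := aux_length_le l
  have hr := aux_length_le r
  have hlp := aux_length_pos l
  have hrp := aux_length_pos r
  rw [PTree.Balanced, leafList, height, List.length_append, pow_succ] at hb
  have h1 : 2 ^ l.height ≤ 2 ^ (max l.height r.height) :=
    Nat.pow_le_pow_right (by norm_num) (le_max_left _ _)
  have h2 : 2 ^ r.height ≤ 2 ^ (max l.height r.height) :=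
    Nat.pow_le_pow_right (by norm_num) (le_max_right _ _)
  have hel : 2 ^ l.height = 2 ^ (max l.height r.height) := by omega
  have her : 2 ^ r.height = 2 ^ (max l.height r.height) := by omega
  have hl' : l.height = max l.height r.height :=
    Nat.pow_right_injective (by norm_num) hel
  have hr' : r.height = max l.height r.height :=
    Nat.pow_right_injective (by norm_num) her
  refine ⟨?_, ?_, by omega, ?_⟩
  · rw [PTree.Balanced]; omega
  · rw [PTree.Balanced]; omega
  · rw [height]; omega

theorem aux_iso_refl (t : PTree α) : Iso t t := by
  induction t with
  | leaf x => exact .leaf x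
  | node l r ihl ihr => exact .node ihl ihr

theorem aux_leaves_node (l r : PTree α) : (node l r).leaves = l.leaves ∪ r.leaves := by
  simp [leaves, leafList]

theorem aux_restrict_congr {Y Z : Finset α} (t : PTree α)
    (h : ∀ x ∈ t.leafList, (x ∈ Y ↔ x ∈ Z)) : t.restrict Y = t.restrict Z := by
  induction t with
  | leaf x =>
    have := h x (by simp [leafList])
    simp only [restrict]
    by_cases hx : x ∈ Y
    · rw [if_pos hx, if_pos (this.mp hx)]
    · rw [if_neg hx, if_neg (fun hz => hx (this.mpr hz))]
  | node l r ihl ihr =>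
    have hl : ∀ x ∈ l.leafList, (x ∈ Y ↔ x ∈ Z) := fun x hx =>
      h x (by simp [leafList, hx])
    have hr : ∀ x ∈ r.leafList, (x ∈ Y ↔ x ∈ Z) := fun x hx =>
      h x (by simp [leafList, hx])
    simp only [restrict, ihl hl, ihr hr]

theorem aux_restrict_none {Y : Finset α} (t : PTree α)
    (h : ∀ x ∈ t.leafList, x ∉ Y) : t.restrict Y = none := by
  induction t with
  | leaf x =>
    simp only [restrict, if_neg (h x (by simp [leafList]))]
  | node l r ihl ihr =>
    have hl := ihl (fun x hx => h x (by simp [leafList, hx]))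
    have hr := ihr (fun x hx => h x (by simp [leafList, hx]))
    simp only [restrict, hl, hr]

theorem aux_restrict_single {Y : Finset α} {y : α} (t : PTree α) (hph : t.Phylo)
    (hy : y ∈ t.leafList) (hY : y ∈ Y)
    (h : ∀ x ∈ t.leafList, x ∈ Y → x = y) : t.restrict Y = some (leaf y) := by
  induction t with
  | leaf x =>
    simp only [leafList, List.mem_singleton] at hy
    subst hy
    simp only [restrict, if_pos hY]
  | node l r ihl ihr =>
    obtain ⟨hpl, hpr, hdisj⟩ := aux_phylo_node hph
    rw [leafList, List.mem_append] at hy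
    cases hy with
    | inl hyl =>
      have h1 := ihl hpl hyl (fun x hx hxY => h x (by simp [leafList, hx]) hxY)
      have h2 : r.restrict Y = none := by
        refine aux_restrict_none r (fun x hx hxY => ?_)
        have := h x (by simp [leafList, hx]) hxY
        subst this
        exact hdisj x hyl hx
      simp only [restrict, h1, h2]
    | inr hyr =>
      have h1 := ihr hpr hyr (fun x hx hxY => h x (by simp [leafList, hx]) hxY)
      have h2 : l.restrict Y = none := by
        refine aux_restrict_none l (fun x hx hxY => ?_)
        have := h x (by simp [leafList, hx]) hxY
        subst this
        exact hdisj x hx hyr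
      simp only [restrict, h1, h2]

end Aux

section Aux2
set_option linter.unusedSectionVars false
variable {α : Type} [DecidableEq α] [Inhabited α]

theorem aux_catList_snoc (x : α) (xs : List α) (y : α) :
    catList (x :: (xs ++ [y])) = node (catList (x :: xs)) (leaf y) := by
  simp [catList, List.foldl_append]

theorem aux_leafList_catList (x : α) (xs : List α) :
    (catList (x :: xs)).leafList = x :: xs := by
  induction xs using List.reverseRecOn with
  | nil => simp [catList, leafList]
  | append_singleton xs y ih =>
    rw [aux_catList_snoc, leafList, ih]
    simp [leafList]

theorem aux_leaves_catList (x : α) (xs : List α) :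
    (catList (x :: xs)).leaves = (x :: xs).toFinset := by
  rw [leaves, aux_leafList_catList]

theorem aux_embeds_leaf (x : α) : Embeds (leaf x) (catList [x]) := by
  have h : catList [x] = leaf x := rfl
  rw [h]
  refine ⟨subset_rfl, leaf x, ?_, aux_iso_refl _⟩
  simp [restrict, leaves, leafList]

theorem aux_embed_ext {l r : PTree α} (hph : (node l r).Phylo)
    {L : List α} (hL : L ≠ []) (hsub : L.toFinset ⊆ l.leaves)
    (hemb : Embeds l (catList L)) {y : α} (hy : y ∈ r.leafList) :
    Embeds (node l r) (catList (L ++ [y])) := by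
  obtain ⟨hpl, hpr, hdisj⟩ := aux_phylo_node hph
  obtain ⟨x, xs, rfl⟩ := List.exists_cons_of_ne_nil hL
  obtain ⟨hsub', R, hres, hiso⟩ := hemb
  rw [aux_leaves_catList] at hres
  rw [List.cons_append, aux_catList_snoc]
  have hyl : y ∉ l.leafList := by
    intro hc
    exact hdisj y hc hy
  have hleaves : (node (catList (x :: xs)) (leaf y)).leaves
      = insert y (x :: xs).toFinset := by
    rw [aux_leaves_node, aux_leaves_catList]
    simp only [leaves, leafList, List.toFinset_append, List.toFinset_cons]
    ext a
    simp
    tauto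
  constructor
  · rw [hleaves, aux_leaves_node, aux_leaves_catList] at *
    intro a ha
    rw [Finset.mem_insert] at ha
    rcases ha with rfl | ha
    · exact Finset.mem_union_right _ (by simp [leaves, hy])
    · exact Finset.mem_union_left _ (hsub ha)
  · -- restriction
    rw [hleaves]
    have h1 : l.restrict (insert y (x :: xs).toFinset) = some R := by
      rw [← hres]
      refine aux_restrict_congr l (fun a ha => ?_)
      simp only [Finset.mem_insert]
      constructor
      · rintro (rfl | h)
        · exact absurd ha hyl
        · exact h
      · exact fun h => Or.inr h
    have h2 : r.restrict (insert y (x :: xs).toFinset) = some (leaf y) := by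
      refine aux_restrict_single r hpr hy (by simp) (fun a ha haY => ?_)
      rcases Finset.mem_insert.mp haY with rfl | h
      · rfl
      · exact absurd (hsub h) (by simp [leaves]; intro hc; exact hdisj a hc ha)
    refine ⟨node R (leaf y), ?_, Iso.node hiso (Iso.leaf y)⟩
    simp only [restrict, h1, h2]

end Aux2

section Aux3
set_option linter.unusedSectionVars false
set_option maxHeartbeats 1000000
variable {α : Type} [DecidableEq α] [Inhabited α]

theorem aux_embed_ext_right {l r : PTree α} (hph : (node l r).Phylo)
    {L : List α} (hL : L ≠ []) (hsub : L.toFinset ⊆ r.leaves)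
    (hemb : Embeds r (catList L)) {y : α} (hy : y ∈ l.leafList) :
    Embeds (node l r) (catList (L ++ [y])) := by
  obtain ⟨hpl, hpr, hdisj⟩ := aux_phylo_node hph
  obtain ⟨x, xs, rfl⟩ := List.exists_cons_of_ne_nil hL
  obtain ⟨hsub', R, hres, hiso⟩ := hemb
  rw [aux_leaves_catList] at hres
  rw [List.cons_append, aux_catList_snoc]
  have hyr : y ∉ r.leafList := hdisj y hy
  have hleaves : (node (catList (x :: xs)) (leaf y)).leaves
      = insert y (x :: xs).toFinset := by
    rw [aux_leaves_node, aux_leaves_catList]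
    simp only [leaves, leafList, List.toFinset_append, List.toFinset_cons]
    ext a
    simp
    tauto
  constructor
  · rw [hleaves, aux_leaves_node]
    intro a ha
    rw [Finset.mem_insert] at ha
    rcases ha with rfl | ha
    · exact Finset.mem_union_left _ (by simp [leaves, hy])
    · exact Finset.mem_union_right _ (hsub ha)
  · rw [hleaves]
    have h1 : r.restrict (insert y (x :: xs).toFinset) = some R := by
      rw [← hres]
      refine aux_restrict_congr r (fun a ha => ?_)
      simp only [Finset.mem_insert]
      constructor
      · rintro (rfl | h)
        · exact absurd ha hyr
        · exact h
      · exact fun h => Or.inr h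
    have h2 : l.restrict (insert y (x :: xs).toFinset) = some (leaf y) := by
      refine aux_restrict_single l hpl hy (by simp) (fun a ha haY => ?_)
      rcases Finset.mem_insert.mp haY with rfl | h
      · rfl
      · exact absurd (hsub h) (by simp [leaves]; intro hc; exact hdisj a ha hc)
    refine ⟨node (leaf y) R, ?_, Iso.swap (Iso.leaf y) hiso⟩
    simp only [restrict, h1, h2]

theorem aux_mem_leaves {t : PTree α} {a : α} : a ∈ t.leaves ↔ a ∈ t.leafList := by
  simp [leaves]

theorem aux_main (t : PTree α) : t.Phylo → t.Balanced → ∀ m : ℕ,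
    2 ^ m * (t.height + 1) ≤ 2 ^ t.height →
    ∃ L : Fin (2 ^ m) → List α,
      (∀ i, (L i).length = t.height + 1 ∧ (L i).Nodup ∧ (L i).toFinset ⊆ t.leaves ∧
        Embeds t (catList (L i))) ∧
      (∀ i j, i ≠ j → Disjoint (L i).toFinset (L j).toFinset) := by
  induction t with
  | leaf z =>
    intro hph hb m hm
    simp only [height, pow_zero, mul_one] at hm
    have h1 : 1 ≤ 2 ^ m := Nat.one_le_two_pow
    refine ⟨fun _ => [z], fun i => ?_, fun i j hij => ?_⟩
    · refine ⟨rfl, by simp, by simp [leaves, leafList], aux_embeds_leaf z⟩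
    · exact absurd (Fin.ext (by have := i.isLt; have := j.isLt; omega)) hij
  | node l r ihl ihr =>
    intro hph hb m hm
    obtain ⟨hbl, hbr, hhe, hht⟩ := aux_balanced_node hb
    obtain ⟨hpl, hpr, hdisj⟩ := aux_phylo_node hph
    set h := l.height with hh
    rw [hht] at hm ⊢
    have hdisj' : ∀ a, a ∈ l.leaves → a ∈ r.leaves → False := by
      intro a h1 h2
      exact hdisj a (aux_mem_leaves.mp h1) (aux_mem_leaves.mp h2)
    cases m with
    | zero =>
      have hcond : 2 ^ 0 * (l.height + 1) ≤ 2 ^ l.height := by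
        simp only [pow_zero, one_mul]
        exact Nat.lt_two_pow_self (n := _)
      obtain ⟨L, hL1, _⟩ := ihl hpl hbl 0 hcond
      obtain ⟨hlen, hnd, hsub, hemb⟩ := hL1 0
      have hy : r.leafList.head (aux_leafList_ne_nil r) ∈ r.leafList :=
        List.head_mem _
      set y := r.leafList.head (aux_leafList_ne_nil r) with hydef
      have hLne : L 0 ≠ [] := by
        intro hc; rw [hc] at hlen; simp at hlen
      have hyL : y ∉ L 0 := by
        intro hc
        exact hdisj' y (hsub (List.mem_toFinset.mpr hc)) (aux_mem_leaves.mpr hy)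
      refine ⟨fun _ => L 0 ++ [y], fun i => ⟨?_, ?_, ?_, ?_⟩, fun i j hij => ?_⟩
      · simp [hlen]
      · simp [List.nodup_append, hnd, hyL]; exact fun a ha hay => hyL (hay ▸ ha)
      · rw [aux_leaves_node]
        intro a ha
        simp only [List.toFinset_append, List.toFinset_cons, List.toFinset_nil,
          Finset.mem_union] at ha
        rcases ha with ha | ha
        · exact Finset.mem_union_left _ (hsub ha)
        · simp at ha
          subst ha
          exact Finset.mem_union_right _ (aux_mem_leaves.mpr hy)
      · exact aux_embed_ext hph hLne hsub hemb hy
      · exact absurd (Fin.ext (by have := i.isLt; have := j.isLt; omega)) hij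
    | succ s =>
      set N := 2 ^ s with hN
      have hA : N * (h + 2) ≤ 2 ^ h := by
        have h2 : N * (h + 2) * 2 ≤ 2 ^ h * 2 := by
          calc N * (h + 2) * 2 = 2 ^ (s + 1) * (h + 1 + 1) := by rw [pow_succ]; ring
          _ ≤ 2 ^ (h + 1) := hm
          _ = 2 ^ h * 2 := pow_succ 2 h
        omega
      have hcond : N * (h + 1) ≤ 2 ^ h :=
        le_trans (Nat.mul_le_mul_left _ (by omega)) hA
      obtain ⟨Ll, hLl1, hLl2⟩ := ihl hpl hbl s hcond
      obtain ⟨Lr, hLr1, hLr2⟩ := ihr hpr hbr s (by rw [← hhe]; exact hcond)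
      -- fresh leaves in r not used by Lr
      have fresh : ∀ (tt : PTree α), tt.Phylo → tt.Balanced → tt.height = h →
          ∀ (Lt : Fin N → List α), (∀ i, (Lt i).length = tt.height + 1 ∧ (Lt i).Nodup ∧
            (Lt i).toFinset ⊆ tt.leaves ∧ Embeds tt (catList (Lt i))) →
          ∃ z : Fin N → α, (∀ i, z i ∈ tt.leaves ∧ ∀ j, z i ∉ Lt j) ∧
            Function.Injective z := by
        intro tt hptt hbtt hhtt Lt hLt
        set U := Finset.univ.biUnion (fun i : Fin N => (Lt i).toFinset) with hU
        have hUcard : U.card ≤ N * (h + 1) := by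
          calc U.card ≤ ∑ i : Fin N, (Lt i).toFinset.card := Finset.card_biUnion_le
          _ = ∑ i : Fin N, (h + 1) := by
            refine Finset.sum_congr rfl (fun i _ => ?_)
            rw [List.toFinset_card_of_nodup (hLt i).2.1, (hLt i).1, hhtt]
          _ = N * (h + 1) := by simp [Finset.sum_const, Finset.card_univ]
        have htcard : tt.leaves.card = 2 ^ h := by
          rw [leaves, List.toFinset_card_of_nodup hptt, hbtt, hhtt]
        have hfree : N ≤ (tt.leaves \ U).card := by
          have h1 : tt.leaves.card - U.card ≤ (tt.leaves \ U).card :=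
            Finset.le_card_sdiff U tt.leaves
          have h2 : N * (h + 1) + N ≤ 2 ^ h := by
            calc N * (h + 1) + N = N * (h + 2) := by ring
            _ ≤ 2 ^ h := hA
          omega
        set ylist := (tt.leaves \ U).toList with hyl
        have hylen : N ≤ ylist.length := by
          rw [hyl, Finset.length_toList]; exact hfree
        refine ⟨fun i => ylist.get ⟨i, lt_of_lt_of_le i.isLt hylen⟩, fun i => ?_, ?_⟩
        · have hmem : ylist.get ⟨i, lt_of_lt_of_le i.isLt hylen⟩ ∈ tt.leaves \ U := by
            rw [← Finset.mem_toList]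
            exact List.get_mem _ _
          rw [Finset.mem_sdiff] at hmem
          refine ⟨hmem.1, fun j hc => hmem.2 ?_⟩
          exact Finset.mem_biUnion.mpr ⟨j, Finset.mem_univ j, List.mem_toFinset.mpr hc⟩
        · intro i j hij
          have hnd : ylist.Nodup := Finset.nodup_toList _
          have h5 := (List.Nodup.get_inj_iff hnd).mp hij
          exact Fin.ext (Fin.mk_eq_mk.mp h5)
      obtain ⟨y, hy1, hyinj⟩ := fresh r hpr hbr hhe.symm Lr hLr1
      obtain ⟨x, hx1, hxinj⟩ := fresh l hpl hbl rfl Ll hLl1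
      have hNN : 2 ^ (s + 1) = N + N := by rw [pow_succ]; omega
      refine ⟨fun i => if hi : (i : ℕ) < N then Ll ⟨i, hi⟩ ++ [y ⟨i, hi⟩]
        else Lr ⟨(i : ℕ) - N, by have := i.isLt; omega⟩ ++
          [x ⟨(i : ℕ) - N, by have := i.isLt; omega⟩], ?_, ?_⟩
      · intro i
        by_cases hi : (i : ℕ) < N
        · simp only [dif_pos hi]
          obtain ⟨hlen, hnd, hsub, hemb⟩ := hLl1 ⟨i, hi⟩
          obtain ⟨hymem, hyfree⟩ := hy1 ⟨i, hi⟩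
          have hLne : Ll ⟨i, hi⟩ ≠ [] := by
            intro hc; rw [hc] at hlen; simp at hlen
          have hynotin : y ⟨i, hi⟩ ∉ Ll ⟨i, hi⟩ := by
            intro hc
            exact hdisj' _ (hsub (List.mem_toFinset.mpr hc)) hymem
          refine ⟨by simp [hlen], by simp [List.nodup_append, hnd, hynotin]; exact fun a ha hay => hynotin (hay ▸ ha), ?_, ?_⟩
          · rw [aux_leaves_node]
            intro a ha
            simp only [List.toFinset_append, List.toFinset_cons, List.toFinset_nil,
              Finset.mem_union] at ha
            rcases ha with ha | ha
            · exact Finset.mem_union_left _ (hsub ha)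
            · simp at ha; subst ha
              exact Finset.mem_union_right _ hymem
          · exact aux_embed_ext hph hLne hsub hemb (aux_mem_leaves.mp hymem)
        · simp only [dif_neg hi]
          have hib : (i : ℕ) - N < N := by have := i.isLt; omega
          obtain ⟨hlen, hnd, hsub, hemb⟩ := hLr1 ⟨(i : ℕ) - N, hib⟩
          obtain ⟨hxmem, hxfree⟩ := hx1 ⟨(i : ℕ) - N, hib⟩
          have hLne : Lr ⟨(i : ℕ) - N, hib⟩ ≠ [] := by
            intro hc; rw [hc] at hlen; simp at hlen
          have hxnotin : x ⟨(i : ℕ) - N, hib⟩ ∉ Lr ⟨(i : ℕ) - N, hib⟩ := by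
            intro hc
            exact hdisj' _ hxmem (hsub (List.mem_toFinset.mpr hc))
          refine ⟨by simp [hlen]; omega, by simp [List.nodup_append, hnd, hxnotin]; exact fun a ha hay => hxnotin (hay ▸ ha), ?_, ?_⟩
          · rw [aux_leaves_node]
            intro a ha
            simp only [List.toFinset_append, List.toFinset_cons, List.toFinset_nil,
              Finset.mem_union] at ha
            rcases ha with ha | ha
            · exact Finset.mem_union_right _ (hsub ha)
            · simp at ha; subst ha
              exact Finset.mem_union_left _ hxmem
          · exact aux_embed_ext_right hph hLne hsub hemb (aux_mem_leaves.mp hxmem)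
      · intro i j hij
        rw [List.disjoint_toFinset_iff_disjoint]
        intro a hai haj
        have hsubL : ∀ k, (Ll k).toFinset ⊆ l.leaves := fun k => (hLl1 k).2.2.1
        have hsubR : ∀ k, (Lr k).toFinset ⊆ r.leaves := fun k => (hLr1 k).2.2.1
        have memL : ∀ k a, a ∈ Ll k → a ∈ l.leaves := fun k a ha =>
          hsubL k (List.mem_toFinset.mpr ha)
        have memR : ∀ k a, a ∈ Lr k → a ∈ r.leaves := fun k a ha =>
          hsubR k (List.mem_toFinset.mpr ha)
        by_cases hi : (i : ℕ) < N <;> by_cases hj : (j : ℕ) < N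
        · simp only [dif_pos hi] at hai
          simp only [dif_pos hj] at haj
          rw [List.mem_append, List.mem_singleton] at hai haj
          rcases hai with hai | rfl
          · rcases haj with haj | rfl
            · have hij' : (⟨(i:ℕ), hi⟩ : Fin N) ≠ ⟨(j:ℕ), hj⟩ := fun hc =>
                hij (Fin.ext (Fin.mk_eq_mk.mp hc))
              exact List.disjoint_toFinset_iff_disjoint.mp (hLl2 _ _ hij')
                hai haj
            · exact hdisj' _ (memL _ _ hai) (hy1 ⟨(j:ℕ), hj⟩).1
          · rcases haj with haj | heq
            · exact hdisj' _ (memL _ _ haj) (hy1 ⟨(i:ℕ), hi⟩).1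
            · have h5 := hyinj heq
              exact hij (Fin.ext (Fin.mk_eq_mk.mp h5))
        · simp only [dif_pos hi] at hai
          simp only [dif_neg hj] at haj
          rw [List.mem_append, List.mem_singleton] at hai haj
          rcases hai with hai | rfl
          · rcases haj with haj | rfl
            · exact hdisj' _ (memL _ _ hai) (memR _ _ haj)
            · exact (hx1 _).2 _ hai
          · rcases haj with haj | heq
            · exact (hy1 _).2 _ haj
            · exact hdisj' _ (heq ▸ (hx1 _).1) (hy1 ⟨(i:ℕ), hi⟩).1
        · simp only [dif_neg hi] at hai
          simp only [dif_pos hj] at haj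
          rw [List.mem_append, List.mem_singleton] at hai haj
          rcases hai with hai | rfl
          · rcases haj with haj | rfl
            · exact hdisj' _ (memL _ _ haj) (memR _ _ hai)
            · exact (hy1 _).2 _ hai
          · rcases haj with haj | heq
            · exact (hx1 _).2 _ haj
            · exact hdisj' _ (hx1 ⟨(i:ℕ) - N, _⟩).1 (heq ▸ (hy1 _).1)
        · simp only [dif_neg hi] at hai
          simp only [dif_neg hj] at haj
          rw [List.mem_append, List.mem_singleton] at hai haj
          rcases hai with hai | rfl
          · rcases haj with haj | rfl
            · have hij' : (⟨(i:ℕ) - N, by have := i.isLt; omega⟩ : Fin N)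
                  ≠ ⟨(j:ℕ) - N, by have := j.isLt; omega⟩ := by
                intro hc
                have h5 := Fin.mk_eq_mk.mp hc
                have hib := i.isLt
                have hjb := j.isLt
                exact hij (Fin.ext (by omega))
              exact List.disjoint_toFinset_iff_disjoint.mp (hLr2 _ _ hij')
                hai haj
            · exact hdisj' _ (hx1 _).1 (memR _ _ hai)
          · rcases haj with haj | heq
            · exact hdisj' _ (hx1 _).1 (memR _ _ haj)
            · have h5 := Fin.mk_eq_mk.mp (hxinj heq)
              have hib := i.isLt
              have hjb := j.isLt
              exact hij (Fin.ext (by omega))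

end Aux3

/-- Every balanced rooted binary phylogenetic tree on
`2 ^ (n - 1)` leaves embeds `2 ^ ⌊n - log₂ n - 1⌋` label-disjoint
`n`-caterpillars. -/
theorem balanced_embeds_disjoint_caterpillars {α : Type} [DecidableEq α] [Inhabited α]
    (n : ℕ) (hn : 0 < n) (T : PTree α)
    (hT : Phylo T) (hb : Balanced T) (hcard : T.leaves.card = 2 ^ (n - 1)) :
    ∃ L : Fin (2 ^ ⌊(n : ℝ) - Real.logb 2 n - 1⌋₊) → List α,
      (∀ i, (L i).length = n ∧ (L i).Nodup ∧ Embeds T (catList (L i))) ∧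
      (∀ i j, i ≠ j → Disjoint (L i).toFinset (L j).toFinset) := by
  set m := ⌊(n : ℝ) - Real.logb 2 n - 1⌋₊ with hmdef
  have hlen : T.leafList.length = 2 ^ (n - 1) := by
    rw [← hcard, leaves, List.toFinset_card_of_nodup hT]
  have hheight : T.height = n - 1 := by
    have hb' : T.leafList.length = 2 ^ T.height := hb
    refine Nat.pow_right_injective (le_refl 2) ?_
    show (2:ℕ) ^ T.height = 2 ^ (n - 1)
    rw [← hb']
    exact hlen
  have hnle : n ≤ 2 ^ (n - 1) := by
    have := Nat.lt_two_pow_self (n := n - 1)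
    omega
  have hn1 : (1 : ℝ) ≤ (n : ℝ) := by exact_mod_cast hn
  have hcast : ((n : ℝ) - 1) = ((n - 1 : ℕ) : ℝ) := by
    rw [Nat.cast_sub hn]; simp
  have hlog : Real.logb 2 n ≤ (n : ℝ) - 1 := by
    rw [Real.logb_le_iff_le_rpow (by norm_num) (by positivity)]
    rw [hcast, Real.rpow_natCast]
    exact_mod_cast hnle
  have hfl : (m : ℝ) ≤ (n : ℝ) - Real.logb 2 n - 1 := Nat.floor_le (by linarith)
  have h2logb : (2 : ℝ) ^ Real.logb 2 (n : ℝ) = n :=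
    Real.rpow_logb (by norm_num) (by norm_num) (by linarith)
  have hkeyR : (2 : ℝ) ^ (m : ℝ) * n ≤ 2 ^ ((n : ℝ) - 1) := by
    have h1 : (2 : ℝ) ^ (m : ℝ) ≤ 2 ^ ((n : ℝ) - Real.logb 2 n - 1) :=
      Real.rpow_le_rpow_of_exponent_le (by norm_num) hfl
    calc (2 : ℝ) ^ (m : ℝ) * n
        = (2 : ℝ) ^ (m : ℝ) * 2 ^ Real.logb 2 (n : ℝ) := by rw [h2logb]
      _ ≤ (2 : ℝ) ^ ((n : ℝ) - Real.logb 2 n - 1) * 2 ^ Real.logb 2 (n : ℝ) := by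
          have hpos : (0 : ℝ) ≤ (2 : ℝ) ^ Real.logb 2 (n : ℝ) :=
            (Real.rpow_pos_of_pos (by norm_num) _).le
          exact mul_le_mul_of_nonneg_right h1 hpos
      _ = (2 : ℝ) ^ ((n : ℝ) - 1) := by
          rw [← Real.rpow_add (by norm_num)]
          ring_nf
  have key : 2 ^ m * n ≤ 2 ^ (n - 1) := by
    have h3 := hkeyR
    rw [hcast, Real.rpow_natCast, Real.rpow_natCast] at h3
    exact_mod_cast h3
  have cond : 2 ^ m * (T.height + 1) ≤ 2 ^ T.height := by
    rw [hheight]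
    have h4 : n - 1 + 1 = n := by omega
    rw [h4]
    exact key
  obtain ⟨L, h1, h2⟩ := aux_main T hT hb m cond
  refine ⟨L, fun i => ⟨?_, (h1 i).2.1, (h1 i).2.2.2⟩, h2⟩
  rw [(h1 i).1, hheight]
  omega
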